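/- Let E be an approval election with n voters and m candidates, let k be a committee size with k ≤ m, and let ℓ ∈ {1, …, k}. Let s be the smallest positive integer with s·k > m. Form the election E' by adding to E exactly s·k new candidates approved by no voter and (s−1)·n new voters who approve no candidates, and set the committee size to k' = s·k. Define f : {1,…,k'} → ℝ by f(i) = 0 for i < ℓ and f(i) = k' for i ≥ ℓ. Then E' has a size-k' committee with proportionality degree f if and only if E (with committee size k) has no ℓ-cohesive group. -/

import Mathlib

/-- `X` is an `ℓ`-cohesive group in the approval election with voter type `V`,
candidate type `C`, approval function `A`, `n` voters and committee size `k`: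
`|X| ≥ ℓ·n/k` and at least `ℓ` candidates are approved by every member of `X`. -/
def IsCohesive {V C : Type*} [Fintype C] [DecidableEq C]
    (A : V → Finset C) (n k ℓ : ℕ) (X : Finset V) : Prop :=
  (ℓ : ℝ) * n / k ≤ X.card ∧
    ℓ ≤ (Finset.univ.filter (fun c : C => ∀ v ∈ X, c ∈ A v)).card

/-- The average satisfaction of the group of voters `X` with the committee `W`. -/
noncomputable def avgSat {V C : Type*} [DecidableEq C]
    (A : V → Finset C) (W : Finset C) (X : Finset V) : ℝ :=
  (∑ v ∈ X, ((A v ∩ W).card : ℝ)) / X.card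


/-- The committee `W` has proportionality degree `f`: for every `ℓ ∈ {1,…,k}`,
every `ℓ`-cohesive group has average satisfaction with `W` at least `f ℓ`. -/
def HasPD {V C : Type*} [Fintype C] [DecidableEq C]
    (A : V → Finset C) (n k : ℕ) (W : Finset C) (f : ℕ → ℝ) : Prop :=
  ∀ ℓ ∈ Finset.Icc 1 k, ∀ X : Finset V, IsCohesive A n k ℓ X → f ℓ ≤ avgSat A W X

theorem stmt12 {V C : Type*} [Fintype V] [Fintype C] [DecidableEq V] [DecidableEq C]
    (A : V → Finset C) (k ℓ s : ℕ) (hk : 0 < k) (hkm : k ≤ Fintype.card C)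
    (hℓ1 : 1 ≤ ℓ) (hℓk : ℓ ≤ k)
    (hs : 0 < s ∧ Fintype.card C < s * k ∧ ∀ s' : ℕ, 0 < s' → Fintype.card C < s' * k → s ≤ s')
    (A' : V ⊕ Fin ((s - 1) * Fintype.card V) → Finset (C ⊕ Fin (s * k)))
    (hA'1 : ∀ v : V, A' (Sum.inl v) = (A v).map ⟨Sum.inl, Sum.inl_injective⟩)
    (hA'2 : ∀ w, A' (Sum.inr w) = ∅) :
    (∃ W' : Finset (C ⊕ Fin (s * k)), W'.card = s * k ∧
        HasPD A' (s * Fintype.card V) (s * k) W'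
          (fun i => if i < ℓ then 0 else ((s * k : ℕ) : ℝ))) ↔
      ¬ ∃ X : Finset V, IsCohesive A (Fintype.card V) k ℓ X := by
  have hnV : (0:ℝ) ≤ (Fintype.card V : ℝ) := by positivity
  have hs0 : (s : ℝ) ≠ 0 := Nat.cast_ne_zero.mpr hs.1.ne'
  have hk0 : (k : ℝ) ≠ 0 := Nat.cast_ne_zero.mpr hk.ne'
  have hskpos : (0 : ℝ) < ((s * k : ℕ) : ℝ) := by exact_mod_cast Nat.mul_pos hs.1 hk
  have hCpos : 0 < Fintype.card C := lt_of_lt_of_le hk hkm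
  constructor
  · rintro ⟨W', hWc, hPD⟩ ⟨X, hX⟩
    set X' := X.map ⟨Sum.inl, Sum.inl_injective⟩ with hX'def
    have hcard' : X'.card = X.card := Finset.card_map _
    have hcoh' : IsCohesive A' (s * Fintype.card V) (s * k) ℓ X' := by
      constructor
      · have h1 := hX.1
        have heq : (ℓ : ℝ) * (↑(s * Fintype.card V)) / (↑(s * k))
            = (ℓ : ℝ) * (Fintype.card V) / k := by
          push_cast; field_simp
        rw [heq, hcard']
        exact h1
      · refine le_trans hX.2 ?_
        apply Finset.card_le_card_of_injOn Sum.inl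
        · intro c hc
          simp only [Finset.mem_coe, Finset.mem_filter, Finset.mem_univ, true_and] at hc ⊢
          intro v' hv'
          rw [hX'def, Finset.mem_map] at hv'
          obtain ⟨v, hv, rfl⟩ := hv'
          show Sum.inl c ∈ A' (Sum.inl v)
          rw [hA'1, Finset.mem_map]
          exact ⟨c, hc v hv, rfl⟩
        · exact fun a _ b _ hab => Sum.inl_injective hab
    have hIcc : ℓ ∈ Finset.Icc 1 (s * k) :=
      Finset.mem_Icc.mpr ⟨hℓ1, le_trans hℓk (Nat.le_mul_of_pos_left k hs.1)⟩
    have hge := hPD ℓ hIcc X' hcoh'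
    simp only [lt_self_iff_false, if_false] at hge
    have hub : avgSat A' W' X' < ((s * k : ℕ) : ℝ) := by
      unfold avgSat
      rcases X.eq_empty_or_nonempty with rfl | hXne
      · simpa [hX'def] using hskpos
      · have hXcpos : (0 : ℝ) < (X'.card : ℝ) := by
          rw [hcard']
          exact_mod_cast Finset.card_pos.mpr hXne
        rw [div_lt_iff₀ hXcpos]
        have hterm : ∀ v' ∈ X', ((A' v' ∩ W').card : ℝ) ≤ (Fintype.card C : ℝ) := by
          intro v' hv'
          have h1 : (A' v' ∩ W').card ≤ (A' v').card :=
            Finset.card_le_card (Finset.inter_subset_left)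
          have h2 : (A' v').card ≤ Fintype.card C := by
            rw [hX'def, Finset.mem_map] at hv'
            obtain ⟨v, hv, rfl⟩ := hv'
            show (A' (Sum.inl v)).card ≤ Fintype.card C
            rw [hA'1, Finset.card_map]
            exact Finset.card_le_univ _
          exact_mod_cast le_trans h1 h2
        calc ∑ v' ∈ X', ((A' v' ∩ W').card : ℝ)
            ≤ ∑ _v' ∈ X', (Fintype.card C : ℝ) := Finset.sum_le_sum hterm
          _ = X'.card * (Fintype.card C : ℝ) := by rw [Finset.sum_const, nsmul_eq_mul]
          _ < ((s * k : ℕ) : ℝ) * X'.card := by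
              rw [mul_comm (((s * k : ℕ)) : ℝ)]
              apply mul_lt_mul_of_pos_left _ hXcpos
              exact_mod_cast hs.2.1
    linarith
  · intro h
    have hnpos : 0 < Fintype.card V := by
      by_contra hn0
      push_neg at hn0
      have hn0' : Fintype.card V = 0 := Nat.le_zero.mp hn0
      apply h
      refine ⟨∅, ?_, ?_⟩
      · simp [hn0']
      · simpa using le_trans hℓk hkm
    refine ⟨(Finset.univ : Finset (Fin (s * k))).map ⟨Sum.inr, Sum.inr_injective⟩, by simp, ?_⟩
    intro ℓ' hℓ' X' hX'
    by_cases hlt : ℓ' < ℓ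
    · simp only [hlt, if_true]
      unfold avgSat
      positivity
    · exfalso
      push_neg at hlt
      have hℓ'1 : 1 ≤ ℓ' := (Finset.mem_Icc.mp hℓ').1
      have hpos : (0 : ℝ) < (ℓ' : ℝ) * (↑(s * Fintype.card V)) / (↑(s * k)) := by
        have h1 : (0:ℝ) < (ℓ' : ℝ) := by exact_mod_cast hℓ'1
        have h2 : (0:ℝ) < ((s * Fintype.card V : ℕ) : ℝ) := by
          exact_mod_cast Nat.mul_pos hs.1 hnpos
        positivity
      have hXne : X'.Nonempty := by
        rw [← Finset.card_pos]
        have := lt_of_lt_of_le hpos hX'.1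
        exact_mod_cast this
      -- every candidate approved by all of X' is an inl
      have hinlc : ∀ a : C ⊕ Fin (s * k), (∀ v ∈ X', a ∈ A' v) → ∃ c, a = Sum.inl c := by
        intro a ha
        obtain ⟨v0, hv0⟩ := hXne
        cases v0 with
        | inl v =>
          have := ha _ hv0
          rw [hA'1, Finset.mem_map] at this
          obtain ⟨c, _, rfl⟩ := this
          exact ⟨c, rfl⟩
        | inr w =>
          exfalso
          have := ha _ hv0
          rw [hA'2] at this
          exact absurd this (Finset.notMem_empty _)
      -- every member of X' is an inl
      have hinl : ∀ v' ∈ X', ∃ v, v' = Sum.inl v := by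
        intro v' hv'
        cases v' with
        | inl v => exact ⟨v, rfl⟩
        | inr w =>
          exfalso
          obtain ⟨c', hc'⟩ := Finset.card_pos.mp (lt_of_lt_of_le hℓ'1 hX'.2)
          simp only [Finset.mem_filter] at hc'
          have hmem := hc'.2 _ hv'
          rw [hA'2] at hmem
          exact absurd hmem (Finset.notMem_empty _)
      set X : Finset V := Finset.univ.filter (fun v => Sum.inl v ∈ X') with hXdef
      have hX'eq : X' = X.map ⟨Sum.inl, Sum.inl_injective⟩ := by
        ext v'
        simp only [Finset.mem_map, Function.Embedding.coeFn_mk, hXdef, Finset.mem_filter,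
          Finset.mem_univ, true_and]
        constructor
        · intro hv'
          obtain ⟨v, rfl⟩ := hinl v' hv'
          exact ⟨v, hv', rfl⟩
        · rintro ⟨v, hv, rfl⟩
          exact hv
      apply h
      refine ⟨X, ?_, ?_⟩
      · have hcard : X'.card = X.card := by rw [hX'eq, Finset.card_map]
        have h1 := hX'.1
        rw [hcard] at h1
        have heq : (ℓ' : ℝ) * (↑(s * Fintype.card V)) / (↑(s * k))
            = (ℓ' : ℝ) * (Fintype.card V) / k := by
          push_cast; field_simp
        rw [heq] at h1
        refine le_trans ?_ h1
        gcongr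
      · refine le_trans hlt (le_trans hX'.2 ?_)
        have : Nonempty C := Fintype.card_pos_iff.mp hCpos
        apply Finset.card_le_card_of_injOn (Sum.elim id (fun _ => Classical.arbitrary C))
        · intro a ha
          simp only [Finset.mem_coe, Finset.mem_filter] at ha
          obtain ⟨c, rfl⟩ := hinlc a ha.2
          simp only [Finset.mem_coe, Sum.elim_inl, id_eq, Finset.mem_filter, Finset.mem_univ, true_and]
          intro v hv
          rw [hXdef, Finset.mem_filter] at hv
          have hmem2 := ha.2 _ hv.2
          rw [hA'1, Finset.mem_map] at hmem2
          obtain ⟨c2, hc2, hc2eq⟩ := hmem2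
          have hcc : c2 = c := Sum.inl_injective hc2eq
          rwa [hcc] at hc2
        · intro a ha b hb hab
          simp only [Finset.mem_coe, Finset.mem_filter] at ha hb
          obtain ⟨ca, rfl⟩ := hinlc a ha.2
          obtain ⟨cb, rfl⟩ := hinlc b hb.2
          simpa using hab
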